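/- Let R be a ring and J a one-sided (left or right) ideal of R. If J is left T-nilpotent, then the two-sided ideal RJR = {finite sums of elements r·j·r′ with r, r′ ∈ R, j ∈ J} is left T-nilpotent. -/

import Mathlib

/-- The ordered product `s 0 * s 1 * ⋯ * s n` of the first `n + 1` terms of a sequence. -/
def seqProd {R : Type*} [Mul R] (s : ℕ → R) : ℕ → R
  | 0 => s 0
  | n + 1 => seqProd s n * s (n + 1)

/-- A subset `S` of a ring is left T-nilpotent if for every sequence `s₁, s₂, …` of
elements of `S` there is an integer `k ≥ 1` with `s₁ * s₂ * ⋯ * s_k = 0`. -/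
def IsLeftTNilpotent {R : Type*} [Mul R] [Zero R] (S : Set R) : Prop :=
  ∀ s : ℕ → R, (∀ n, s n ∈ S) → ∃ k : ℕ, seqProd s k = 0

namespace TNilpAux

variable {R : Type*} [Ring R]

/-- Product `t k * t (k+1) * ⋯ * t (k+m)`. -/
def F (t : ℕ → R) (k m : ℕ) : R := seqProd (fun i => t (k + i)) m

lemma seqProd_shift (s : ℕ → R) (n : ℕ) :
    seqProd s (n + 1) = s 0 * seqProd (fun i => s (i + 1)) n := by
  induction n with
  | zero => rfl
  | succ n ih =>
    show seqProd s (n + 1) * s (n + 2) = _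
    rw [ih, mul_assoc]
    rfl

lemma F_mul (t : ℕ → R) (k m : ℕ) : F t k (m + 1) = F t k m * t (k + m + 1) := rfl

lemma F_succ (t : ℕ → R) (k m : ℕ) : F t k (m + 1) = t k * F t (k + 1) m := by
  induction m with
  | zero => rfl
  | succ m ih =>
    have h : k + (m + 1) + 1 = k + 1 + m + 1 := by omega
    rw [F_mul t k (m + 1), ih, mul_assoc, h, ← F_mul t (k + 1) m]

lemma vanish_mono (t : ℕ → R) (k : ℕ) (p : R) {m m' : ℕ} (h : m ≤ m')
    (h0 : p * F t k m = 0) : p * F t k m' = 0 := by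
  obtain ⟨n, rfl⟩ := Nat.le.dest h
  clear h
  induction n with
  | zero => exact h0
  | succ n ih =>
    rw [show m + (n + 1) = (m + n) + 1 from rfl, F_mul, ← mul_assoc, ih, zero_mul]

lemma step_lemma (t : ℕ → R) (S : Set R)
    (ht : ∀ n, t n ∈ AddSubgroup.closure S) (k : ℕ) (p : R)
    (hp : ∀ m, p * F t k m ≠ 0) :
    ∃ x ∈ S, ∀ m, (p * x) * F t (k + 1) m ≠ 0 := by
  by_contra h
  push_neg at h
  have key : ∀ y ∈ AddSubgroup.closure S, ∃ m, (p * y) * F t (k + 1) m = 0 := by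
    intro y hy
    induction hy using AddSubgroup.closure_induction with
    | mem x hx => exact h x hx
    | zero => exact ⟨0, by simp⟩
    | add a b _ _ iha ihb =>
      obtain ⟨m₁, h₁⟩ := iha
      obtain ⟨m₂, h₂⟩ := ihb
      refine ⟨max m₁ m₂, ?_⟩
      have h₁' := vanish_mono t (k+1) (p * a) (le_max_left m₁ m₂) h₁
      have h₂' := vanish_mono t (k+1) (p * b) (le_max_right m₁ m₂) h₂
      rw [mul_add, add_mul, h₁', h₂', add_zero]
    | neg a _ iha =>
      obtain ⟨m, hm⟩ := iha
      exact ⟨m, by rw [mul_neg, neg_mul, hm, neg_zero]⟩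
  obtain ⟨m, hm⟩ := key (t k) (ht k)
  exact hp (m + 1) (by rw [F_succ, ← mul_assoc]; exact hm)

/-- dependent-choice construction of the chosen sequence of single terms. -/
lemma build (t : ℕ → R) (S : Set R) (G : ℕ → R → Prop) (h1 : G 0 1)
    (hstep : ∀ k p, G k p → ∃ x ∈ S, G (k + 1) (p * x)) :
    ∃ x : ℕ → R, (∀ n, x n ∈ S) ∧ ∀ n, G (n + 1) (seqProd x n) := by
  classical
  let ch : ∀ n : ℕ, {p : R // G n p} := fun n =>
    Nat.rec ⟨1, h1⟩
      (fun n ih =>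
        ⟨ih.1 * Classical.choose (hstep n ih.1 ih.2),
          (Classical.choose_spec (hstep n ih.1 ih.2)).2⟩) n
  refine ⟨fun n => Classical.choose (hstep n (ch n).1 (ch n).2),
    fun n => (Classical.choose_spec (hstep n (ch n).1 (ch n).2)).1, ?_⟩
  have key : ∀ n, seqProd (fun n => Classical.choose (hstep n (ch n).1 (ch n).2)) n
      = (ch (n + 1)).1 := by
    intro n
    induction n with
    | zero => exact (one_mul _).symm
    | succ n ih =>
      show seqProd _ n * _ = (ch (n + 2)).1
      rw [ih]
  intro n
  rw [key n]
  exact (ch (n + 1)).2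

end TNilpAux

theorem isLeftTNilpotent_RJR_of_oneSided
    {R : Type*} [Ring R] (J : AddSubgroup R)
    (hone : (∀ r : R, ∀ x ∈ J, r * x ∈ J) ∨ (∀ r : R, ∀ x ∈ J, x * r ∈ J))
    (hJ : IsLeftTNilpotent (J : Set R)) :
    IsLeftTNilpotent
      ((AddSubgroup.closure {x : R | ∃ r j r' : R, j ∈ J ∧ x = r * j * r'} : AddSubgroup R)
        : Set R) := by
  classical
  intro t ht
  by_contra hcon
  push_neg at hcon
  set S : Set R := {x : R | ∃ r j r' : R, j ∈ J ∧ x = r * j * r'} with hS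
  -- Good k p : all products p * t k * ⋯ * t (k+m) are nonzero
  have h1 : ∀ m, (1 : R) * TNilpAux.F t 0 m ≠ 0 := by
    intro m
    rw [one_mul]
    have : TNilpAux.F t 0 m = seqProd t m := by
      unfold TNilpAux.F
      congr 1
      funext i
      rw [Nat.zero_add]
    rw [this]
    exact hcon m
  obtain ⟨x, hxS, hxG⟩ := TNilpAux.build t S
    (fun k p => ∀ m, p * TNilpAux.F t k m ≠ 0) h1
    (fun k p hp => TNilpAux.step_lemma t S ht k p hp)
  -- decompose each chosen term
  choose r j r' hj hx using hxS
  -- partial products of x are nonzero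
  have hxne : ∀ n, seqProd x n ≠ 0 := by
    intro n h0
    exact hxG n 0 (by rw [h0, zero_mul])
  rcases hone with hL | hR
  · -- left ideal case: s i = (r' (i-1)) * r i * j i ∈ J
    set s : ℕ → R := fun i => (if i = 0 then 1 else r' (i - 1)) * r i * j i with hs
    have hsJ : ∀ i, s i ∈ J := by
      intro i
      have := hL ((if i = 0 then 1 else r' (i - 1)) * r i) (j i) (hj i)
      simpa [hs, mul_assoc] using this
    have hkey : ∀ n, seqProd s n * r' n = seqProd x n := by
      intro n
      induction n with
      | zero =>
        show s 0 * r' 0 = x 0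
        rw [hs, hx 0]
        simp
      | succ n ih =>
        show seqProd s n * s (n + 1) * r' (n + 1) = seqProd x n * x (n + 1)
        rw [hx (n + 1), ← ih]
        have hsn : s (n + 1) = r' n * r (n + 1) * j (n + 1) := by simp [hs]
        rw [hsn]
        simp only [mul_assoc]
    obtain ⟨k, hk⟩ := hJ s hsJ
    have : seqProd x k = 0 := by rw [← hkey k, hk, zero_mul]
    exact hxne k this
  · -- right ideal case: s i = j i * (r' i * r (i+1)) ∈ J
    set s : ℕ → R := fun i => j i * (r' i * r (i + 1)) with hs
    have hsJ : ∀ i, s i ∈ J := fun i => hR (r' i * r (i + 1)) (j i) (hj i)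
    have hkey : ∀ n, r 0 * seqProd s n = seqProd x n * r (n + 1) := by
      intro n
      induction n with
      | zero =>
        show r 0 * s 0 = x 0 * r 1
        rw [hs, hx 0]
        simp [mul_assoc]
      | succ n ih =>
        show r 0 * (seqProd s n * s (n + 1)) = seqProd x n * x (n + 1) * r (n + 2)
        rw [← mul_assoc, ih, hx (n + 1), hs]
        simp only [mul_assoc]
    obtain ⟨k, hk⟩ := hJ s hsJ
    have h2 : seqProd x (k + 1) = seqProd x k * (r (k + 1) * (j (k + 1) * r' (k + 1))) := by
      show seqProd x k * x (k + 1) = _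
      rw [hx (k + 1)]
      simp [mul_assoc]
    have h3 : seqProd x k * r (k + 1) = 0 := by
      rw [← hkey k, hk, mul_zero]
    have : seqProd x (k + 1) = 0 := by
      rw [h2, ← mul_assoc, h3, zero_mul]
    exact hxne (k + 1) this
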